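/- Let X = [0,1] ∪ {4n, 4n+1 : n ∈ ℕ, n ≥ 1} ⊂ ℝ with the usual metric, and T : X → X defined by Tx = x/(x+1) for x ∈ [0,1], T(4n) = 0, T(4n+1) = 1 − 1/n. Then T is not a large contraction: for every δ ∈ (0,1) there exist x,y ∈ X with d(x,y) ≥ 1 and d(Tx,Ty) > δ·d(x,y). -/
import Mathlib


theorem stmt_12 (T : ℝ → ℝ)
    (hT1 : ∀ x ∈ Set.Icc (0:ℝ) 1, T x = x / (x + 1))
    (hT2 : ∀ n : ℕ, 1 ≤ n → T (4 * n) = 0 ∧ T (4 * n + 1) = 1 - 1 / n) :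
    ∀ δ : ℝ, δ ∈ Set.Ioo (0:ℝ) 1 →
      ∃ x ∈ (Set.Icc (0:ℝ) 1 ∪ {t : ℝ | ∃ n : ℕ, 1 ≤ n ∧ (t = 4 * n ∨ t = 4 * n + 1)}),
      ∃ y ∈ (Set.Icc (0:ℝ) 1 ∪ {t : ℝ | ∃ n : ℕ, 1 ≤ n ∧ (t = 4 * n ∨ t = 4 * n + 1)}),
        |x - y| ≥ 1 ∧ |T x - T y| > δ * |x - y| := by
  intro δ hδ
  obtain ⟨n, hn⟩ := exists_nat_one_div_lt (show (0:ℝ) < 1 - δ by linarith [hδ.2])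
  set m := n + 1
  have hm : 1 ≤ m := Nat.le_add_left 1 n
  obtain ⟨h0, h1⟩ := hT2 m hm
  refine ⟨4 * m + 1, Or.inr ⟨m, hm, Or.inr rfl⟩, 4 * m, Or.inr ⟨m, hm, Or.inl rfl⟩, ?_, ?_⟩
  · simp
  · rw [h0, h1]
    have h2 : (1:ℝ)/m < 1 - δ := by
      have : ((m:ℝ)) = n + 1 := by push_cast [m]; ring
      rw [this]; exact hn
    have hmpos : (0:ℝ) < m := by positivity
    have : |4 * (m:ℝ) + 1 - 4 * m| = 1 := by simp
    rw [this, mul_one]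
    have : |1 - 1/(m:ℝ) - 0| = 1 - 1/m := by
      rw [sub_zero, abs_of_nonneg]
      have : (1:ℝ)/m ≤ 1 := by
        rw [div_le_one hmpos]; exact_mod_cast hm
      linarith
    rw [this]; linarith
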